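/- In the bit-serial multiset max procedure, an index j stays alive through all w steps if and only if L[j] equals the maximum of the list L. -/

import Mathlib

/-- One step of the bit-serial multiset max procedure at bit `i`. -/
def listOrStep (L : List ℕ) : Finset (Fin L.length) × ℕ → ℕ → Finset (Fin L.length) × ℕ :=
  fun st i =>
    let A := st.1
    let s : Bool := decide (∃ j ∈ A, (L.get j).testBit i = true)
    (A.filter (fun j => (L.get j).testBit i = s), st.2 + (if s then 2 ^ i else 0))

/-- The set of indices still alive after all `w` steps. -/
def finalAlive (w : ℕ) (L : List ℕ) : Finset (Fin L.length) :=
  (((List.range w).reverse).foldl (listOrStep L) (Finset.univ, 0)).1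

/-- State after processing bits `w-1` down to `i`. -/
def stateAt (w : ℕ) (L : List ℕ) (i : ℕ) : Finset (Fin L.length) × ℕ :=
  ((List.range' i (w - i)).reverse).foldl (listOrStep L) (Finset.univ, 0)

lemma finalAlive_eq (w : ℕ) (L : List ℕ) : finalAlive w L = (stateAt w L 0).1 := by
  simp [finalAlive, stateAt, List.range_eq_range']

lemma stateAt_succ (w : ℕ) (L : List ℕ) (i : ℕ) (h : i < w) :
    stateAt w L i = listOrStep L (stateAt w L (i + 1)) i := by
  have h1 : w - i = (w - (i + 1)) + 1 := by omega
  rw [stateAt, h1, List.range'_succ, List.reverse_cons, List.foldl_append]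
  rfl

lemma foldr_max_mem (L : List ℕ) (h : L ≠ []) : L.foldr max 0 ∈ L := by
  induction L with
  | nil => simp at h
  | cons a l ih =>
    cases l with
    | nil => simp
    | cons b t =>
      rcases le_total ((b :: t).foldr max 0) a with h1 | h1
      · rw [List.foldr_cons, max_eq_left h1]
        exact List.mem_cons_self
      · have := ih (by simp)
        rw [List.foldr_cons, max_eq_right h1]
        exact List.mem_cons_of_mem _ this

lemma le_foldr_max (L : List ℕ) : ∀ x ∈ L, x ≤ L.foldr max 0 := by
  induction L with
  | nil => simp
  | cons a l ih =>
    intro x hx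
    rcases List.mem_cons.mp hx with h | h
    · subst h; exact le_max_left _ _
    · exact le_trans (ih x h) (le_max_right _ _)

lemma div_succ_eq (a i : ℕ) : a / 2 ^ i = a / 2 ^ (i + 1) * 2 + a / 2 ^ i % 2 := by
  have h1 : a / 2 ^ (i + 1) = a / 2 ^ i / 2 := by
    rw [pow_succ, Nat.div_div_eq_div_mul]
  omega

lemma div_eq_iff' (a b i : ℕ) :
    a / 2 ^ i = b / 2 ^ i ↔
      a / 2 ^ (i + 1) = b / 2 ^ (i + 1) ∧ a / 2 ^ i % 2 = b / 2 ^ i % 2 := by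
  have ha := div_succ_eq a i
  have hb := div_succ_eq b i
  have hma : a / 2 ^ i % 2 < 2 := Nat.mod_lt _ (by norm_num)
  have hmb : b / 2 ^ i % 2 < 2 := Nat.mod_lt _ (by norm_num)
  omega

lemma alive_invariant (w : ℕ) (L : List ℕ) (hne : L ≠ [])
    (hw : ∀ x ∈ L, x < 2 ^ w) :
    ∀ i, i ≤ w → (stateAt w L i).1 =
      Finset.univ.filter
        (fun j => L.get j / 2 ^ i = (L.foldr max 0) / 2 ^ i) := by
  set M := L.foldr max 0 with hM
  have hMmem : M ∈ L := foldr_max_mem L hne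
  have hMlt : M < 2 ^ w := hw M hMmem
  obtain ⟨j0, hj0⟩ := List.mem_iff_get.mp hMmem
  intro i hi
  induction' hd : w - i with d ihd generalizing i
  · have hiw : i = w := by omega
    subst hiw
    have h0 : stateAt i L i = (Finset.univ, 0) := by
      simp [stateAt]
    rw [h0]
    ext j
    simp only [Finset.mem_filter, Finset.mem_univ, true_and]
    have h1 : L.get j < 2 ^ i := hw _ (List.get_mem L j)
    simp [Nat.div_eq_of_lt h1, Nat.div_eq_of_lt hMlt]
    exact h1
  · have hiw : i < w := by omega
    have ih := ihd (i + 1) (by omega) (by omega)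
    rw [stateAt_succ w L i hiw, listOrStep]
    simp only
    set A := (stateAt w L (i + 1)).1 with hA
    have hs : (decide (∃ j ∈ A, (L.get j).testBit i = true)) = M.testBit i := by
      rcases hMtb : M.testBit i with _ | _
      · -- testBit false: nobody alive has bit i set
        simp only [decide_eq_false_iff_not]
        rintro ⟨j, hjA, hjtb⟩
        rw [ih, Finset.mem_filter] at hjA
        have hdiv : L.get j / 2 ^ (i + 1) = M / 2 ^ (i + 1) := hjA.2
        have h1 : L.get j / 2 ^ i % 2 = 1 := by
          have := Nat.testBit_eq_decide_div_mod_eq (x := L.get j) (i := i)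
          rw [hjtb] at this
          exact of_decide_eq_true this.symm
        have h2 : M / 2 ^ i % 2 ≠ 1 := by
          have := Nat.testBit_eq_decide_div_mod_eq (x := M) (i := i)
          rw [hMtb] at this
          exact of_decide_eq_false this.symm
        have hle : L.get j ≤ M := le_foldr_max L _ (List.get_mem L j)
        have hdle : L.get j / 2 ^ i ≤ M / 2 ^ i := Nat.div_le_div_right hle
        have e1 := div_succ_eq (L.get j) i
        have e2 := div_succ_eq M i
        omega
      · -- testBit true: j0 is alive and has bit i set
        simp only [decide_eq_true_eq]
        refine ⟨j0, ?_, by rw [hj0]; exact hMtb⟩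
        rw [ih, Finset.mem_filter]
        exact ⟨Finset.mem_univ _, by rw [hj0]⟩
    rw [hs, ih]
    ext j
    simp only [Finset.mem_filter, Finset.mem_univ, true_and, and_assoc]
    have htb : ((L.get j).testBit i = M.testBit i) ↔
        (L.get j / 2 ^ i % 2 = M / 2 ^ i % 2) := by
      rw [Nat.testBit_eq_decide_div_mod_eq, Nat.testBit_eq_decide_div_mod_eq, decide_eq_decide]
      omega
    rw [htb, ← div_eq_iff']

/-- An index stays alive through all `w` steps iff its element is the maximum. -/
theorem alive_iff_max (w : ℕ) (L : List ℕ) (hne : L ≠ [])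
    (hw : ∀ x ∈ L, x < 2 ^ w) (j : Fin L.length) :
    j ∈ finalAlive w L ↔ L.get j = L.foldr max 0 := by
  rw [finalAlive_eq, alive_invariant w L hne hw 0 (Nat.zero_le _)]
  simp
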